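/- Let Ẽ_k denote the k-th elementary symmetric function of 1, λ_1, ..., λ_m. The determinant of the (m+2)×(m+2) matrix whose first m rows are (row i has 1 in column i and −λ_i² in column i+2, zeros elsewhere), whose (m+1)-th row is (Ẽ_{m+1}, Ẽ_m, ..., Ẽ_1, 1), and whose (m+2)-th row is ((−1)^{m+1}Ẽ_{m+1}, (−1)^m Ẽ_m, ..., −Ẽ_1, 1), equals 2pq, where p = 1 + λ_m² Ẽ_2 + λ_{m−2}²λ_m² Ẽ_4 + ⋯ and q = Ẽ_1 + λ_{m−1}² Ẽ_3 + λ_{m−3}²λ_{m−1}² Ẽ_5 + ⋯. -/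

import Mathlib

open Finset

/-- The `k`-th elementary symmetric function of the `m+1` numbers `1, l 0, ..., l (m-1)`. -/
def esymmTilde (m : ℕ) (l : Fin m → ℝ) (k : ℕ) : ℝ :=
  ∑ s ∈ Finset.powersetCard k (Finset.univ : Finset (Fin (m + 1))),
    ∏ i ∈ s, (Fin.cons 1 l : Fin (m + 1) → ℝ) i

/-- `l` read at a natural-number index (junk value `0` out of range; never used below). -/
def lget (m : ℕ) (l : Fin m → ℝ) (n : ℕ) : ℝ :=
  if h : n < m then l ⟨n, h⟩ else 0

/-- Coefficient `λ_{m-2j+2}² λ_{m-2j+4}² ⋯ λ_m²` of `Ẽ_{2j}` in `p` (1-indexed λ's). -/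
def coefP (m : ℕ) (l : Fin m → ℝ) (j : ℕ) : ℝ :=
  ∏ t ∈ Finset.range j, (lget m l (m - 1 - 2 * t)) ^ 2

/-- Coefficient `λ_{m-2j}² λ_{m-2j+2}² ⋯ λ_{m-1}²` of `Ẽ_{2j+1}` in `q` (1-indexed λ's). -/
def coefQ (m : ℕ) (l : Fin m → ℝ) (j : ℕ) : ℝ :=
  ∏ t ∈ Finset.range j, (lget m l (m - 2 - 2 * t)) ^ 2

/-- `p = 1 + λ_m² Ẽ_2 + λ_{m-2}² λ_m² Ẽ_4 + ⋯`. -/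
def pB (m : ℕ) (l : Fin m → ℝ) : ℝ :=
  ∑ j ∈ Finset.range ((m + 3) / 2), coefP m l j * esymmTilde m l (2 * j)

/-- `q = Ẽ_1 + λ_{m-1}² Ẽ_3 + λ_{m-3}² λ_{m-1}² Ẽ_5 + ⋯`. -/
def qB (m : ℕ) (l : Fin m → ℝ) : ℝ :=
  ∑ j ∈ Finset.range ((m + 2) / 2), coefQ m l j * esymmTilde m l (2 * j + 1)

/-- entries of the column-operation matrix, on ℕ indices. -/
def Tn (m : ℕ) (l : Fin m → ℝ) (j k : ℕ) : ℝ :=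
  if j ≤ k ∧ 2 ∣ (k - j) then
    ∏ s ∈ Finset.range ((k - j) / 2), (lget m l (k - 2 - 2 * s)) ^ 2
  else 0

lemma Tn_self (m : ℕ) (l : Fin m → ℝ) (k : ℕ) : Tn m l k k = 1 := by
  simp [Tn]

lemma Tn_lt (m : ℕ) (l : Fin m → ℝ) {j k : ℕ} (h : k < j) : Tn m l j k = 0 := by
  rw [Tn, if_neg]
  intro hc
  omega

lemma Tn_key (m : ℕ) (l : Fin m → ℝ) (i k : ℕ) (hi : i < m) :
    Tn m l i k - (lget m l i) ^ 2 * Tn m l (i + 2) k = (if k = i then 1 else 0) := by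
  rcases eq_or_ne k i with rfl | hk
  · rw [Tn_self, Tn_lt m l (by omega), if_pos rfl]; ring
  · rw [if_neg hk]
    by_cases h2 : i + 2 ≤ k ∧ 2 ∣ (k - i)
    · obtain ⟨h21, h22⟩ := h2
      rw [Tn, if_pos ⟨by omega, h22⟩, Tn, if_pos ⟨h21, by omega⟩]
      have e1 : (k - i) / 2 = (k - (i + 2)) / 2 + 1 := by omega
      rw [e1, Finset.prod_range_succ]
      have e2 : k - 2 - 2 * ((k - (i + 2)) / 2) = i := by omega
      rw [e2, lget, dif_pos hi]
      ring
    · rw [Tn, if_neg, Tn, if_neg]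
      · ring
      · intro hc; obtain ⟨hc1, hc2⟩ := hc; exact h2 ⟨by omega, by omega⟩
      · intro hc; obtain ⟨hc1, hc2⟩ := hc; exact h2 ⟨by omega, by omega⟩

lemma colSum (m : ℕ) (l : Fin m → ℝ) (k : ℕ) (hk : k ≤ m + 1) (f : ℕ → ℝ) :
    ∑ n ∈ Finset.range (m + 2), f n * Tn m l n k
      = ∑ t ∈ Finset.range (k / 2 + 1),
          (∏ s ∈ Finset.range t, (lget m l (k - 2 - 2 * s)) ^ 2) * f (k - 2 * t) := by
  have himg : Finset.image (fun t => k - 2 * t) (Finset.range (k / 2 + 1))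
      ⊆ Finset.range (m + 2) := by
    intro n hn
    simp only [Finset.mem_image, Finset.mem_range] at hn ⊢
    omega
  have hzero : ∀ n ∈ Finset.range (m + 2),
      n ∉ Finset.image (fun t => k - 2 * t) (Finset.range (k / 2 + 1)) →
      f n * Tn m l n k = 0 := by
    intro n _ hn
    rw [Tn, if_neg, mul_zero]
    intro hc
    apply hn
    simp only [Finset.mem_image, Finset.mem_range]
    exact ⟨(k - n) / 2, by omega, by omega⟩
  rw [← Finset.sum_subset himg hzero,
    Finset.sum_image (by intro x hx y hy hxy; simp only [Finset.mem_coe, Finset.mem_range] at hx hy hxy; omega)]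
  refine Finset.sum_congr rfl fun t ht => ?_
  simp only [Finset.mem_range] at ht
  rw [Tn, if_pos ⟨by omega, by omega⟩, mul_comm]
  have e : (k - (k - 2 * t)) / 2 = t := by omega
  rw [e]

def Mmat (m : ℕ) (l : Fin m → ℝ) : Matrix (Fin (m + 2)) (Fin (m + 2)) ℝ :=
  Matrix.of fun i j : Fin (m + 2) =>
    if h : (i : ℕ) < m then
      (if (j : ℕ) = (i : ℕ) then (1 : ℝ)
       else if (j : ℕ) = (i : ℕ) + 2 then -(l ⟨i, h⟩) ^ 2 else 0)
    else if (i : ℕ) = m then esymmTilde m l (m + 1 - (j : ℕ))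
    else (-1) ^ (m + 1 - (j : ℕ)) * esymmTilde m l (m + 1 - (j : ℕ))

def Tmat (m : ℕ) (l : Fin m → ℝ) : Matrix (Fin (m + 2)) (Fin (m + 2)) ℝ :=
  Matrix.of fun j k : Fin (m + 2) => Tn m l j k

lemma Tmat_det (m : ℕ) (l : Fin m → ℝ) : (Tmat m l).det = 1 := by
  rw [Matrix.det_of_upperTriangular]
  · simp [Tmat, Tn_self]
  · intro i j hij
    exact Tn_lt m l hij

/-- rows below m of M·T are standard basis rows. -/
lemma MT_row_lt (m : ℕ) (l : Fin m → ℝ) (i k : Fin (m + 2)) (h : (i : ℕ) < m) :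
    (Mmat m l * Tmat m l) i k = if (k : ℕ) = (i : ℕ) then 1 else 0 := by
  rw [Matrix.mul_apply]
  have hM : ∀ j : Fin (m + 2), Mmat m l i j =
      (if (j : ℕ) = (i : ℕ) then (1 : ℝ)
       else if (j : ℕ) = (i : ℕ) + 2 then -(lget m l i) ^ 2 else 0) := by
    intro j
    simp only [Mmat, Matrix.of_apply]
    rw [dif_pos h, lget, dif_pos h]
  have step1 : ∑ j : Fin (m + 2), Mmat m l i j * Tmat m l j k
      = ∑ j : Fin (m + 2),
          (if (j : ℕ) = (i : ℕ) then (1 : ℝ)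
           else if (j : ℕ) = (i : ℕ) + 2 then -(lget m l i) ^ 2 else 0) * Tn m l j k :=
    Finset.sum_congr rfl fun j _ => by rw [hM]; rfl
  rw [step1, Fin.sum_univ_eq_sum_range (fun n =>
      (if n = (i : ℕ) then (1 : ℝ)
       else if n = (i : ℕ) + 2 then -(lget m l i) ^ 2 else 0) * Tn m l n k)]
  have step2 : ∑ n ∈ Finset.range (m + 2),
      (if n = (i : ℕ) then (1 : ℝ)
       else if n = (i : ℕ) + 2 then -(lget m l i) ^ 2 else 0) * Tn m l n k
    = ∑ n ∈ Finset.range (m + 2),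
        ((if n = (i : ℕ) then Tn m l i k else 0)
          + (if n = (i : ℕ) + 2 then -(lget m l i) ^ 2 * Tn m l ((i : ℕ) + 2) k else 0)) := by
    refine Finset.sum_congr rfl fun n _ => ?_
    rcases eq_or_ne n (i : ℕ) with rfl | h1
    · simp [show ¬((i : ℕ) = (i : ℕ) + 2) by omega]
    · rcases eq_or_ne n ((i : ℕ) + 2) with rfl | h2
      · simp [h1]
      · simp [h1, h2]
  rw [step2, Finset.sum_add_distrib, Finset.sum_ite_eq' (Finset.range (m + 2)),
    Finset.sum_ite_eq' (Finset.range (m + 2)),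
    if_pos (Finset.mem_range.mpr (by omega)), if_pos (Finset.mem_range.mpr (by omega))]
  have := Tn_key m l (i : ℕ) (k : ℕ) h
  calc Tn m l (i : ℕ) (k : ℕ) + -(lget m l i) ^ 2 * Tn m l ((i : ℕ) + 2) (k : ℕ)
      = Tn m l (i : ℕ) (k : ℕ) - (lget m l i) ^ 2 * Tn m l ((i : ℕ) + 2) (k : ℕ) := by ring
    _ = if (k : ℕ) = (i : ℕ) then 1 else 0 := this

lemma MT_row_m (m : ℕ) (l : Fin m → ℝ) (i k : Fin (m + 2)) (hi : (i : ℕ) = m) :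
    (Mmat m l * Tmat m l) i k
      = ∑ t ∈ Finset.range ((k : ℕ) / 2 + 1),
          (∏ s ∈ Finset.range t, (lget m l ((k : ℕ) - 2 - 2 * s)) ^ 2)
            * esymmTilde m l (m + 1 - ((k : ℕ) - 2 * t)) := by
  rw [Matrix.mul_apply]
  have hM : ∀ j : Fin (m + 2), Mmat m l i j = esymmTilde m l (m + 1 - (j : ℕ)) := by
    intro j
    simp only [Mmat, Matrix.of_apply]
    rw [dif_neg (by omega), if_pos hi]
  have step1 : ∑ j : Fin (m + 2), Mmat m l i j * Tmat m l j k
      = ∑ j : Fin (m + 2), esymmTilde m l (m + 1 - (j : ℕ)) * Tn m l j k :=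
    Finset.sum_congr rfl fun j _ => by rw [hM]; rfl
  rw [step1, Fin.sum_univ_eq_sum_range
      (fun n => esymmTilde m l (m + 1 - n) * Tn m l n k),
    colSum m l k (by omega) (fun n => esymmTilde m l (m + 1 - n))]

lemma MT_row_m1 (m : ℕ) (l : Fin m → ℝ) (i k : Fin (m + 2)) (hi : (i : ℕ) = m + 1) :
    (Mmat m l * Tmat m l) i k
      = ∑ t ∈ Finset.range ((k : ℕ) / 2 + 1),
          (∏ s ∈ Finset.range t, (lget m l ((k : ℕ) - 2 - 2 * s)) ^ 2)
            * ((-1) ^ (m + 1 - ((k : ℕ) - 2 * t))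
                * esymmTilde m l (m + 1 - ((k : ℕ) - 2 * t))) := by
  rw [Matrix.mul_apply]
  have hM : ∀ j : Fin (m + 2), Mmat m l i j
      = (-1) ^ (m + 1 - (j : ℕ)) * esymmTilde m l (m + 1 - (j : ℕ)) := by
    intro j
    simp only [Mmat, Matrix.of_apply]
    rw [dif_neg (by omega), if_neg (by omega)]
  have step1 : ∑ j : Fin (m + 2), Mmat m l i j * Tmat m l j k
      = ∑ j : Fin (m + 2),
          ((-1) ^ (m + 1 - (j : ℕ)) * esymmTilde m l (m + 1 - (j : ℕ))) * Tn m l j k :=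
    Finset.sum_congr rfl fun j _ => by rw [hM]; rfl
  rw [step1, Fin.sum_univ_eq_sum_range
      (fun n => ((-1) ^ (m + 1 - n) * esymmTilde m l (m + 1 - n)) * Tn m l n k),
    colSum m l k (by omega) (fun n => (-1) ^ (m + 1 - n) * esymmTilde m l (m + 1 - n))]

lemma MT_qq (m : ℕ) (l : Fin m → ℝ) (i k : Fin (m + 2))
    (hi : (i : ℕ) = m) (hk : (k : ℕ) = m) :
    (Mmat m l * Tmat m l) i k = qB m l := by
  rw [MT_row_m m l i k hi, hk, qB]
  rw [show m / 2 + 1 = (m + 2) / 2 by omega]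
  refine Finset.sum_congr rfl fun t ht => ?_
  simp only [Finset.mem_range] at ht
  rw [coefQ, show m + 1 - (m - 2 * t) = 2 * t + 1 by omega]

lemma MT_qp (m : ℕ) (l : Fin m → ℝ) (i k : Fin (m + 2))
    (hi : (i : ℕ) = m) (hk : (k : ℕ) = m + 1) :
    (Mmat m l * Tmat m l) i k = pB m l := by
  rw [MT_row_m m l i k hi, hk, pB]
  rw [show (m + 1) / 2 + 1 = (m + 3) / 2 by omega]
  refine Finset.sum_congr rfl fun t ht => ?_
  simp only [Finset.mem_range] at ht
  have hp : (∏ s ∈ Finset.range t, (lget m l (m + 1 - 2 - 2 * s)) ^ 2) = coefP m l t :=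
    Finset.prod_congr rfl fun s _ => by rw [show m + 1 - 2 - 2 * s = m - 1 - 2 * s by omega]
  rw [hp, show m + 1 - (m + 1 - 2 * t) = 2 * t by omega]

lemma MT_q'q (m : ℕ) (l : Fin m → ℝ) (i k : Fin (m + 2))
    (hi : (i : ℕ) = m + 1) (hk : (k : ℕ) = m) :
    (Mmat m l * Tmat m l) i k = -qB m l := by
  rw [MT_row_m1 m l i k hi, hk, qB, ← Finset.sum_neg_distrib]
  rw [show m / 2 + 1 = (m + 2) / 2 by omega]
  refine Finset.sum_congr rfl fun t ht => ?_
  simp only [Finset.mem_range] at ht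
  rw [coefQ, show m + 1 - (m - 2 * t) = 2 * t + 1 by omega,
    Odd.neg_one_pow ⟨t, by ring⟩]
  ring

lemma MT_q'p (m : ℕ) (l : Fin m → ℝ) (i k : Fin (m + 2))
    (hi : (i : ℕ) = m + 1) (hk : (k : ℕ) = m + 1) :
    (Mmat m l * Tmat m l) i k = pB m l := by
  rw [MT_row_m1 m l i k hi, hk, pB]
  rw [show (m + 1) / 2 + 1 = (m + 3) / 2 by omega]
  refine Finset.sum_congr rfl fun t ht => ?_
  simp only [Finset.mem_range] at ht
  have hp : (∏ s ∈ Finset.range t, (lget m l (m + 1 - 2 - 2 * s)) ^ 2) = coefP m l t :=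
    Finset.prod_congr rfl fun s _ => by rw [show m + 1 - 2 - 2 * s = m - 1 - 2 * s by omega]
  rw [hp, show m + 1 - (m + 1 - 2 * t) = 2 * t by omega,
    Even.neg_one_pow (⟨t, by ring⟩ : Even (2 * t))]
  ring

theorem main (m : ℕ) (l : Fin m → ℝ) : (Mmat m l).det = 2 * pB m l * qB m l := by
  have h1 : (Mmat m l).det = (Mmat m l * Tmat m l).det := by
    rw [Matrix.det_mul, Tmat_det, mul_one]
  let e : Fin m ⊕ Fin 2 ≃ Fin (m + 2) := finSumFinEquiv
  have h2 : (Mmat m l * Tmat m l).det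
      = ((Mmat m l * Tmat m l).submatrix e e).det :=
    (Matrix.det_submatrix_equiv_self e _).symm
  have h3 : (Mmat m l * Tmat m l).submatrix e e
      = Matrix.fromBlocks 1 0
          (Matrix.of fun (a : Fin 2) (b : Fin m) =>
            (Mmat m l * Tmat m l) (e (Sum.inr a)) (e (Sum.inl b)))
          !![qB m l, pB m l; -qB m l, pB m l] := by
    ext a b
    rcases a with a | a <;> rcases b with b | b
    · simp only [Matrix.submatrix_apply, Matrix.fromBlocks_apply₁₁]
      have ha : ((e (Sum.inl a) : Fin (m + 2)) : ℕ) = (a : ℕ) := by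
        simp [e, finSumFinEquiv]
      have hb : ((e (Sum.inl b) : Fin (m + 2)) : ℕ) = (b : ℕ) := by
        simp [e, finSumFinEquiv]
      rw [MT_row_lt m l _ _ (by rw [ha]; exact a.isLt), ha, hb, Matrix.one_apply]
      by_cases hab : a = b
      · rw [if_pos hab, if_pos (by rw [hab])]
      · rw [if_neg hab, if_neg (fun hc => hab (Fin.ext hc.symm))]
    · simp only [Matrix.submatrix_apply, Matrix.fromBlocks_apply₁₂, Matrix.zero_apply]
      have ha : ((e (Sum.inl a) : Fin (m + 2)) : ℕ) = (a : ℕ) := by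
        simp [e, finSumFinEquiv]
      have hb : ((e (Sum.inr b) : Fin (m + 2)) : ℕ) = m + (b : ℕ) := by
        simp [e, finSumFinEquiv]
      rw [MT_row_lt m l _ _ (by rw [ha]; exact a.isLt), ha, hb,
        if_neg (by have := a.isLt; omega)]
    · rfl
    · simp only [Matrix.submatrix_apply, Matrix.fromBlocks_apply₂₂]
      fin_cases a <;> fin_cases b <;>
        simp only [Matrix.cons_val', Matrix.cons_val_zero, Matrix.cons_val_one,
          Matrix.head_cons, Matrix.empty_val', Matrix.cons_val_fin_one, Matrix.head_fin_const]
      · exact MT_qq m l _ _ (by simp [e, finSumFinEquiv]) (by simp [e, finSumFinEquiv])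
      · exact MT_qp m l _ _ (by simp [e, finSumFinEquiv]) (by simp [e, finSumFinEquiv])
      · exact MT_q'q m l _ _ (by simp [e, finSumFinEquiv]) (by simp [e, finSumFinEquiv])
      · exact MT_q'p m l _ _ (by simp [e, finSumFinEquiv]) (by simp [e, finSumFinEquiv])
  rw [h1, h2, h3, Matrix.det_fromBlocks_zero₁₂, Matrix.det_one, one_mul,
    Matrix.det_fin_two_of]
  ring


theorem stmt7 (m : ℕ) (l : Fin m → ℝ) :
    (Matrix.of fun i j : Fin (m + 2) =>
        if h : (i : ℕ) < m then
          (if (j : ℕ) = (i : ℕ) then (1 : ℝ)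
           else if (j : ℕ) = (i : ℕ) + 2 then -(l ⟨i, h⟩) ^ 2 else 0)
        else if (i : ℕ) = m then esymmTilde m l (m + 1 - (j : ℕ))
        else (-1) ^ (m + 1 - (j : ℕ)) * esymmTilde m l (m + 1 - (j : ℕ))).det
      = 2 * pB m l * qB m l :=
  main m l
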